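/- Let A be an n×n strict contraction with singular values r_1 ≥ … ≥ r_n. Then for each j = 1,…,n, the j-th largest eigenvalue of Re((I−A)⁻¹) is at most 1/(1−r_j). -/

import Mathlib

open Matrix Finset
open scoped ComplexOrder InnerProductSpace


noncomputable def eigDesc {n : ℕ} {A : Matrix (Fin n) (Fin n) ℂ} (hA : A.IsHermitian)
    (j : Fin n) : ℝ :=
  (hA.eigenvalues ∘ Tuple.sort hA.eigenvalues) j.rev

noncomputable def singVal {n : ℕ} (A : Matrix (Fin n) (Fin n) ℂ) (j : Fin n) : ℝ :=
  Real.sqrt (eigDesc ((Matrix.posSemidef_conjTranspose_mul_self A).isHermitian) j)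

noncomputable def hermPart {n : ℕ} (X : Matrix (Fin n) (Fin n) ℂ) :
    Matrix (Fin n) (Fin n) ℂ :=
  (1/2 : ℂ) • (X + Xᴴ)

lemma hermPart_isHermitian {n : ℕ} (X : Matrix (Fin n) (Fin n) ℂ) :
    (hermPart X).IsHermitian := by
  unfold hermPart
  simp [Matrix.IsHermitian, Matrix.conjTranspose_smul, Matrix.conjTranspose_add, add_comm]

variable {n : ℕ}

local notation "E" n => EuclideanSpace ℂ (Fin n)

noncomputable def Q {n : ℕ} (M : Matrix (Fin n) (Fin n) ℂ) (x : EuclideanSpace ℂ (Fin n)) : ℝ :=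
  Complex.re (inner ℂ x (Matrix.toEuclideanLin M x))

lemma toEuclideanLin_mul_apply (M N : Matrix (Fin n) (Fin n) ℂ) (x : EuclideanSpace ℂ (Fin n)) :
    toEuclideanLin (M * N) x = toEuclideanLin M (toEuclideanLin N x) := by
  simp [toEuclideanLin_apply, mulVec_mulVec]

lemma toEuclideanLin_one_apply (x : EuclideanSpace ℂ (Fin n)) :
    toEuclideanLin (1 : Matrix (Fin n) (Fin n) ℂ) x = x := by
  simp [toEuclideanLin_apply]

lemma toEuclideanLin_eigen {H : Matrix (Fin n) (Fin n) ℂ} (hH : H.IsHermitian) (j : Fin n) :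
    toEuclideanLin H (hH.eigenvectorBasis j) = (hH.eigenvalues j : ℂ) • hH.eigenvectorBasis j := by
  have h := hH.mulVec_eigenvectorBasis j
  apply (WithLp.equiv 2 (Fin n → ℂ)).injective
  simp only [WithLp.equiv_apply, ofLp_toEuclideanLin_apply]
  ext i
  have := congrFun h i
  simpa [Complex.real_smul] using this

lemma toEuclideanLin_selfAdjoint {H : Matrix (Fin n) (Fin n) ℂ} (hH : H.IsHermitian) :
    LinearMap.adjoint (toEuclideanLin H) = toEuclideanLin H := by
  rw [← Matrix.toEuclideanLin_conjTranspose_eq_adjoint, hH.eq]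

lemma repr_toEuclideanLin {H : Matrix (Fin n) (Fin n) ℂ} (hH : H.IsHermitian)
    (x : EuclideanSpace ℂ (Fin n)) (i : Fin n) :
    hH.eigenvectorBasis.repr (toEuclideanLin H x) i
      = (hH.eigenvalues i : ℂ) * hH.eigenvectorBasis.repr x i := by
  set b := hH.eigenvectorBasis
  rw [b.repr_apply_apply, b.repr_apply_apply, ← LinearMap.adjoint_inner_left,
    toEuclideanLin_selfAdjoint hH, toEuclideanLin_eigen hH, inner_smul_left]
  simp
  left; rfl

lemma norm_sq_eq_sum_repr {H : Matrix (Fin n) (Fin n) ℂ} (hH : H.IsHermitian)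
    (x : EuclideanSpace ℂ (Fin n)) :
    ‖x‖ ^ 2 = ∑ i, ‖hH.eigenvectorBasis.repr x i‖ ^ 2 := by
  rw [← hH.eigenvectorBasis.repr.norm_map x, EuclideanSpace.norm_eq,
    Real.sq_sqrt (by positivity)]

lemma Q_eq_sum (H : Matrix (Fin n) (Fin n) ℂ) (hH : H.IsHermitian)
    (x : EuclideanSpace ℂ (Fin n)) :
    Q H x = ∑ i, hH.eigenvalues i * ‖hH.eigenvectorBasis.repr x i‖ ^ 2 := by
  set b := hH.eigenvectorBasis
  have h1 : (inner ℂ x (toEuclideanLin H x) : ℂ)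
      = inner ℂ (b.repr x) (b.repr (toEuclideanLin H x)) := by
    rw [b.repr.inner_map_map]
  rw [Q, h1, PiLp.inner_apply]
  rw [Complex.re_sum]
  congr 1; ext i
  rw [repr_toEuclideanLin hH, RCLike.inner_apply]
  set c := b.repr x i
  have : (hH.eigenvalues i : ℂ) * c * (starRingEnd ℂ) c
      = (hH.eigenvalues i : ℂ) * ((starRingEnd ℂ) c * c) := by ring
  rw [this, Complex.conj_mul']
  simp [← Complex.ofReal_pow]

lemma repr_eq_zero_of_mem_span {H : Matrix (Fin n) (Fin n) ℂ} (hH : H.IsHermitian)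
    (I : Finset (Fin n)) {x : EuclideanSpace ℂ (Fin n)}
    (hx : x ∈ Submodule.span ℂ (⇑hH.eigenvectorBasis '' I)) {i : Fin n} (hi : i ∉ I) :
    hH.eigenvectorBasis.repr x i = 0 := by
  set b := hH.eigenvectorBasis
  have hb : ⇑b = ⇑b.toBasis := by rw [b.coe_toBasis]
  rw [hb] at hx
  have := (Module.Basis.mem_span_image b.toBasis).1 hx
  have hi' : i ∉ (b.toBasis.repr x).support := fun h => hi (this h)
  have : b.toBasis.repr x i = 0 := Finsupp.notMem_support_iff.1 hi'
  rwa [b.coe_toBasis_repr_apply] at this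

lemma finrank_span_eigen {H : Matrix (Fin n) (Fin n) ℂ} (hH : H.IsHermitian)
    (I : Finset (Fin n)) :
    Module.finrank ℂ (Submodule.span ℂ (⇑hH.eigenvectorBasis '' I)) = I.card := by
  set b := hH.eigenvectorBasis
  have hli : LinearIndependent ℂ (⇑b ∘ (Subtype.val : {i // i ∈ I} → Fin n)) := by
    have : ⇑b = ⇑b.toBasis := by rw [b.coe_toBasis]
    rw [this]
    exact b.toBasis.linearIndependent.comp _ Subtype.val_injective
  have hrange : Set.range (⇑b ∘ (Subtype.val : {i // i ∈ I} → Fin n)) = ⇑b '' I := by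
    rw [Set.range_comp, Subtype.range_coe_subtype]
    rfl
  rw [← hrange, finrank_span_eq_card hli, Fintype.card_coe]

noncomputable def cardGe {n : ℕ} {H : Matrix (Fin n) (Fin n) ℂ} (hH : H.IsHermitian) (c : ℝ) : ℕ :=
  (Finset.univ.filter (fun i => c ≤ hH.eigenvalues i)).card

lemma cardGe_eq_sorted {H : Matrix (Fin n) (Fin n) ℂ} (hH : H.IsHermitian) (c : ℝ) :
    cardGe hH c
      = (Finset.univ.filter (fun p => c ≤ hH.eigenvalues (Tuple.sort hH.eigenvalues p))).card := by
  rw [cardGe]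
  apply Finset.card_equiv (Tuple.sort hH.eigenvalues).symm
  intro i
  simp

lemma card_le_eigDesc {H : Matrix (Fin n) (Fin n) ℂ} (hH : H.IsHermitian) (j : Fin n) :
    j.val + 1 ≤ cardGe hH (eigDesc hH j) := by
  rw [cardGe_eq_sorted]
  have hsub : Finset.Ici j.rev ⊆
      Finset.univ.filter (fun p => eigDesc hH j ≤ hH.eigenvalues (Tuple.sort hH.eigenvalues p)) := by
    intro p hp
    simp only [Finset.mem_filter, Finset.mem_univ, true_and]
    exact Tuple.monotone_sort hH.eigenvalues (Finset.mem_Ici.1 hp)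
  calc j.val + 1 = (Finset.Ici j.rev).card := by
        rw [Fin.card_Ici, Fin.val_rev]; omega
    _ ≤ _ := Finset.card_le_card hsub

lemma eigDesc_le_of_card {H : Matrix (Fin n) (Fin n) ℂ} (hH : H.IsHermitian) (j : Fin n)
    {c : ℝ} (h : j.val + 1 ≤ cardGe hH c) : c ≤ eigDesc hH j := by
  by_contra hc
  push_neg at hc
  rw [cardGe_eq_sorted] at h
  have hsub : Finset.univ.filter
      (fun p => c ≤ hH.eigenvalues (Tuple.sort hH.eigenvalues p)) ⊆ Finset.Ioi j.rev := by
    intro p hp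
    simp only [Finset.mem_filter, Finset.mem_univ, true_and] at hp
    rw [Finset.mem_Ioi]
    by_contra hpl
    push_neg at hpl
    have h1 : hH.eigenvalues (Tuple.sort hH.eigenvalues p) ≤ eigDesc hH j :=
      Tuple.monotone_sort hH.eigenvalues hpl
    linarith
  have := (h.trans (Finset.card_le_card hsub))
  rw [Fin.card_Ioi, Fin.val_rev] at this
  have := j.isLt
  omega

lemma Q_ge_on_span {H : Matrix (Fin n) (Fin n) ℂ} (hH : H.IsHermitian) (c : ℝ)
    (I : Finset (Fin n)) (hI : ∀ i ∈ I, c ≤ hH.eigenvalues i)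
    {x : EuclideanSpace ℂ (Fin n)} (hx : x ∈ Submodule.span ℂ (⇑hH.eigenvectorBasis '' I)) :
    c * ‖x‖ ^ 2 ≤ Q H x := by
  rw [Q_eq_sum H hH, norm_sq_eq_sum_repr hH, Finset.mul_sum]
  apply Finset.sum_le_sum
  intro i _
  by_cases hi : i ∈ I
  · exact mul_le_mul_of_nonneg_right (hI i hi) (by positivity)
  · rw [repr_eq_zero_of_mem_span hH I hx hi]
    simp

/-- One direction of Courant–Fischer. -/
lemma cf_lower {H : Matrix (Fin n) (Fin n) ℂ} (hH : H.IsHermitian) (c : ℝ)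
    (S : Submodule ℂ (EuclideanSpace ℂ (Fin n))) (k : ℕ)
    (hdim : k + 1 ≤ Module.finrank ℂ S)
    (hq : ∀ x ∈ S, c * ‖x‖ ^ 2 ≤ Q H x) :
    k + 1 ≤ cardGe hH c := by
  by_contra hcard
  push_neg at hcard
  set J : Finset (Fin n) := Finset.univ.filter (fun i => hH.eigenvalues i < c) with hJ
  have hJcard : n - k ≤ J.card := by
    have : J = (Finset.univ.filter (fun i => c ≤ hH.eigenvalues i))ᶜ := by
      ext i; simp [hJ, not_le]
    rw [this, Finset.card_compl]
    have : cardGe hH c ≤ k := by omega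
    rw [cardGe] at this
    simp only [Fintype.card_fin]
    omega
  set U := Submodule.span ℂ (⇑hH.eigenvectorBasis '' J) with hU
  have hUdim : Module.finrank ℂ U = J.card := finrank_span_eigen hH J
  -- intersection is nonzero
  have hinter : 0 < Module.finrank ℂ (S ⊓ U : Submodule ℂ (EuclideanSpace ℂ (Fin n))) := by
    have hsum := Submodule.finrank_sup_add_finrank_inf_eq S U
    have hle : Module.finrank ℂ (S ⊔ U : Submodule ℂ (EuclideanSpace ℂ (Fin n)))
        ≤ n := by
      have := Submodule.finrank_le (S ⊔ U)
      rwa [finrank_euclideanSpace_fin] at this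
    omega
  obtain ⟨⟨x, hxmem⟩, hxne'⟩ := Module.finrank_pos_iff_exists_ne_zero.1 hinter
  have hxne : x ≠ 0 := by simpa [Submodule.mk_eq_zero] using hxne'
  have hxS : x ∈ S := hxmem.1
  have hxU : x ∈ U := hxmem.2
  -- strict upper bound on Q over U
  have hstrict : Q H x < c * ‖x‖ ^ 2 := by
    rw [Q_eq_sum H hH, norm_sq_eq_sum_repr hH, Finset.mul_sum]
    have hex : ∃ i0, hH.eigenvectorBasis.repr x i0 ≠ 0 := by
      by_contra hall
      push_neg at hall
      apply hxne
      apply hH.eigenvectorBasis.repr.map_eq_zero_iff.1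
      ext i
      exact hall i
    obtain ⟨i0, hi0⟩ := hex
    have hi0J : i0 ∈ J := by
      by_contra h
      exact hi0 (repr_eq_zero_of_mem_span hH J hxU h)
    apply Finset.sum_lt_sum
    · intro i _
      by_cases hi : i ∈ J
      · have : hH.eigenvalues i < c := by
          simp only [hJ, Finset.mem_filter] at hi; exact hi.2
        exact mul_le_mul_of_nonneg_right this.le (by positivity)
      · rw [repr_eq_zero_of_mem_span hH J hxU hi]; simp
    · refine ⟨i0, Finset.mem_univ _, ?_⟩
      have h1 : hH.eigenvalues i0 < c := by
        simp only [hJ, Finset.mem_filter] at hi0J; exact hi0J.2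
      have h2 : 0 < ‖hH.eigenvectorBasis.repr x i0‖ ^ 2 := pow_pos (norm_pos_iff.mpr hi0) 2
      exact mul_lt_mul_of_pos_right h1 h2
  exact absurd (hq x hxS) (not_le.2 hstrict)

lemma Q_hermPart (B : Matrix (Fin n) (Fin n) ℂ) (x : EuclideanSpace ℂ (Fin n)) :
    Q (hermPart B) x = Complex.re (inner ℂ x (toEuclideanLin B x)) := by
  rw [Q, hermPart]
  have h1 : toEuclideanLin ((1/2 : ℂ) • (B + Bᴴ)) x
      = (1/2 : ℂ) • (toEuclideanLin B x + toEuclideanLin Bᴴ x) := by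
    rw [_root_.map_smul, map_add]
    rfl
  rw [h1, inner_smul_right, inner_add_right]
  have h2 : (inner ℂ x (toEuclideanLin Bᴴ x) : ℂ)
      = starRingEnd ℂ (inner ℂ x (toEuclideanLin B x)) := by
    rw [Matrix.toEuclideanLin_conjTranspose_eq_adjoint, LinearMap.adjoint_inner_right,
      ← inner_conj_symm]
  rw [h2]
  set z : ℂ := inner ℂ x (toEuclideanLin B x)
  rw [Complex.add_conj]
  simp

lemma Q_gram (A : Matrix (Fin n) (Fin n) ℂ) (y : EuclideanSpace ℂ (Fin n)) :
    Q (Aᴴ * A) y = ‖toEuclideanLin A y‖ ^ 2 := by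
  rw [Q, toEuclideanLin_mul_apply, Matrix.toEuclideanLin_conjTranspose_eq_adjoint,
    LinearMap.adjoint_inner_right]
  exact inner_self_eq_norm_sq (𝕜 := ℂ) (toEuclideanLin A y)

lemma alg_key {lam t a s : ℝ} (hl : 1 < lam) (ht0 : 0 ≤ t) (ha0 : 0 ≤ a)
    (hcs : s ≤ a * t) (hq : lam * (t^2 - 2*s + a^2) ≤ t^2 - s) :
    (1 - 1/lam)^2 * t^2 ≤ a^2 := by
  have hlpos : (0:ℝ) < lam := by linarith
  have hinv : 0 ≤ 1 - 1/lam := by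
    have : 1/lam < 1 := by rw [div_lt_one hlpos]; exact hl
    linarith
  have hmain : (1 - 1/lam) * t ≤ a := by
    by_contra hcon
    push_neg at hcon
    have hll : lam * (1/lam) = 1 := by field_simp
    have hta : a < t := by nlinarith
    nlinarith [mul_le_mul_of_nonneg_left hcs (by linarith : (0:ℝ) ≤ 2*lam - 1),
      mul_pos (by nlinarith : (0:ℝ) < (1 - 1/lam) * t - a) (by linarith : (0:ℝ) < t - a)]
  calc (1 - 1/lam)^2 * t^2 = ((1 - 1/lam) * t)^2 := by ring
    _ ≤ a^2 := pow_le_pow_left₀ (by positivity) hmain 2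

lemma eig_of_zero {M : Matrix (Fin n) (Fin n) ℂ} (hM : M.IsHermitian) (hz : M = 0)
    (i : Fin n) : hM.eigenvalues i = 0 := by
  subst hz
  have h0 := toEuclideanLin_eigen hM i
  rw [map_zero, LinearMap.zero_apply] at h0
  rcases smul_eq_zero.1 h0.symm with h | h
  · exact_mod_cast h
  · exact absurd h (hM.eigenvectorBasis.orthonormal.ne_zero i)

set_option maxHeartbeats 1000000 in
theorem stmt8 {n : ℕ} (A : Matrix (Fin n) (Fin n) ℂ) (hA : ∀ j, singVal A j < 1) (j : Fin n) :
    eigDesc (hermPart_isHermitian (1 - A)⁻¹) j ≤ 1 / (1 - singVal A j) := by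
  have hr0 : 0 ≤ singVal A j := Real.sqrt_nonneg _
  have hr1 : singVal A j < 1 := hA j
  have hden : 0 < 1 - singVal A j := by linarith
  by_cases hu : IsUnit (1 - A).det
  · -- main case
    set hH := hermPart_isHermitian (1 - A)⁻¹ with hhH
    set lam := eigDesc hH j with hlam
    by_cases hl : lam ≤ 1
    · rw [le_div_iff₀ hden]
      nlinarith
    push_neg at hl
    set hP := (Matrix.posSemidef_conjTranspose_mul_self A).isHermitian with hhP
    have hlpos : (0:ℝ) < lam := by linarith
    have hinvlam : 0 ≤ 1 - 1/lam := by
      have : 1/lam < 1 := by rw [div_lt_one hlpos]; exact hl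
      linarith
    set c : ℝ := (1 - 1/lam)^2 with hc
    -- key claim
    have hkey : c ≤ eigDesc hP j := by
      apply eigDesc_le_of_card hP j
      set I : Finset (Fin n) := Finset.univ.filter (fun i => lam ≤ hH.eigenvalues i) with hI
      set S := Submodule.span ℂ (⇑hH.eigenvectorBasis '' I) with hS
      have hSdim : j.val + 1 ≤ Module.finrank ℂ S := by
        rw [hS, finrank_span_eigen hH I]
        exact card_le_eigDesc hH j
      have hinj : Function.Injective (toEuclideanLin (1 - A)⁻¹) := by
        intro x y hxy
        have h2 := congrArg (toEuclideanLin (1 - A)) hxy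
        rwa [← toEuclideanLin_mul_apply, ← toEuclideanLin_mul_apply,
          Matrix.mul_nonsing_inv _ hu, toEuclideanLin_one_apply, toEuclideanLin_one_apply] at h2
      apply cf_lower hP c (S.map (toEuclideanLin (1 - A)⁻¹)) j.val
      · rw [← LinearEquiv.finrank_eq (Submodule.equivMapOfInjective _ hinj S)]
        exact hSdim
      · intro y hy
        obtain ⟨x, hxS, rfl⟩ := Submodule.mem_map.1 hy
        set y := toEuclideanLin (1 - A)⁻¹ x with hy'
        have hQH : lam * ‖x‖^2 ≤ Q (hermPart (1 - A)⁻¹) x := by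
          apply Q_ge_on_span hH lam I _ hxS
          intro i hi
          exact (Finset.mem_filter.1 hi).2
        rw [Q_hermPart, ← hy'] at hQH
        rw [Q_gram]
        -- x = y - A y
        have hxy : x = y - toEuclideanLin A y := by
          have h3 : toEuclideanLin ((1 - A) * (1 - A)⁻¹) x = x := by
            rw [Matrix.mul_nonsing_inv _ hu, toEuclideanLin_one_apply]
          rw [toEuclideanLin_mul_apply] at h3
          rw [← h3, ← hy', map_sub, LinearMap.sub_apply, toEuclideanLin_one_apply]
        set w := toEuclideanLin A y with hw
        set t := ‖y‖ with ht
        set a := ‖w‖ with ha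
        set s := Complex.re (inner ℂ w y : ℂ) with hs
        have hre : Complex.re (inner ℂ x y : ℂ) = t^2 - s := by
          rw [hxy, inner_sub_left]
          simp only [Complex.sub_re]
          congr 1
          exact inner_self_eq_norm_sq (𝕜 := ℂ) y
        have h6 : RCLike.re (inner ℂ y w : ℂ) = s := by
          rw [RCLike.re_to_complex, hs, ← inner_conj_symm]
          simp
          exact inner_re_symm (𝕜 := ℂ) y w
        have hnx : ‖x‖^2 = t^2 - 2*s + a^2 := by
          rw [hxy, @norm_sub_sq ℂ, h6]
        have hcs : s ≤ a * t := re_inner_le_norm (𝕜 := ℂ) w y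
        have ht0 : 0 ≤ t := norm_nonneg _
        have ha0 : 0 ≤ a := norm_nonneg _
        rw [hnx, hre] at hQH
        calc c * ‖y‖^2 = (1 - 1/lam)^2 * t^2 := by rw [hc]
          _ ≤ a^2 := alg_key hl ht0 ha0 hcs hQH
          _ = ‖toEuclideanLin A y‖^2 := by rw [ha, hw]
    -- from hkey conclude
    have hsq : 1 - 1/lam ≤ singVal A j := by
      have h4 : Real.sqrt c ≤ Real.sqrt (eigDesc hP j) := Real.sqrt_le_sqrt hkey
      rwa [hc, Real.sqrt_sq hinvlam] at h4
    rw [le_div_iff₀ hden]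
    have h5 : lam * (1 - singVal A j) ≤ lam * (1/lam) := by
      apply mul_le_mul_of_nonneg_left _ hlpos.le
      linarith
    have hll : lam * (1/lam) = 1 := by field_simp
    linarith
  · -- degenerate case : (1-A)⁻¹ = 0
    have hB0 : (1 - A)⁻¹ = 0 := Matrix.nonsing_inv_apply_not_isUnit _ hu
    have hz : hermPart (1 - A)⁻¹ = 0 := by
      rw [hB0, hermPart]
      simp
    have hev : ∀ i, (hermPart_isHermitian (1 - A)⁻¹).eigenvalues i = 0 := fun i =>
      eig_of_zero (hermPart_isHermitian (1 - A)⁻¹) hz i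
    have : eigDesc (hermPart_isHermitian (1 - A)⁻¹) j = 0 := by
      rw [eigDesc, Function.comp_apply, hev]
    rw [this]
    positivity
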